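/- Fix M ≥ 0. There exists a constant C > 0 (depending only on M) such that for all nonzero ξ, η ∈ ℝ³ and either choice of sign, ‖Π^M_±(ξ) Π^M_±(η)‖ ≤ C (∠(−ξ,η) + ⟨ξ⟩_M^{−1} + ⟨η⟩_M^{−1}), where ‖·‖ denotes the operator norm of a 4×4 complex matrix acting on ℂ⁴. -/

import Mathlib

noncomputable section

open Matrix Complex

/-- The four Dirac matrices `γ⁰, γ¹, γ², γ³` (in 2×2 block form
`γ⁰ = [[I₂,0],[0,−I₂]]`, `γʲ = [[0,σʲ],[−σʲ,0]]` with the Pauli matrices `σʲ`). -/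
def diracGamma : Fin 4 → Matrix (Fin 4) (Fin 4) ℂ :=
  ![!![1, 0, 0, 0; 0, 1, 0, 0; 0, 0, -1, 0; 0, 0, 0, -1],
    !![0, 0, 0, 1; 0, 0, 1, 0; 0, -1, 0, 0; -1, 0, 0, 0],
    !![0, 0, 0, -I; 0, 0, I, 0; 0, I, 0, 0; -I, 0, 0, 0],
    !![0, 0, 1, 0; 0, 0, 0, -1; -1, 0, 0, 0; 0, 1, 0, 0]]

/-- `β := γ⁰`. -/
def diracBeta : Matrix (Fin 4) (Fin 4) ℂ := diracGamma 0

/-- `αʲ := γ⁰ γʲ` for `j = 1,2,3` (indexed by `j : Fin 3`, so `diracAlpha j = γ⁰ γ^(j+1)`). -/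
def diracAlpha (j : Fin 3) : Matrix (Fin 4) (Fin 4) ℂ := diracGamma 0 * diracGamma j.succ

/-- `ξ·α := ξ₁α¹ + ξ₂α² + ξ₃α³` for `ξ ∈ ℝ³`. -/
def xiDotAlpha (ξ : EuclideanSpace ℝ (Fin 3)) : Matrix (Fin 4) (Fin 4) ℂ :=
  ∑ j : Fin 3, (ξ j : ℂ) • diracAlpha j

/-- The Japanese bracket `⟨ξ⟩_M := √(|ξ|² + M²)`. -/
def jbracket (M : ℝ) (ξ : EuclideanSpace ℝ (Fin 3)) : ℝ :=
  Real.sqrt (‖ξ‖ ^ 2 + M ^ 2)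

/-- The projection symbols `Π^M_s(ξ) := ½[I₄ + s ⟨ξ⟩_M^{−1}(ξ·α + Mβ)]` for a sign `s = ±1`. -/
def projSymbol (M s : ℝ) (ξ : EuclideanSpace ℝ (Fin 3)) : Matrix (Fin 4) (Fin 4) ℂ :=
  (2⁻¹ : ℂ) • ((1 : Matrix (Fin 4) (Fin 4) ℂ) +
    ((s * (jbracket M ξ)⁻¹ : ℝ) : ℂ) • (xiDotAlpha ξ + (M : ℂ) • diracBeta))


/-- The operator norm of a 4×4 complex matrix acting on `ℂ⁴` (with the Euclidean norm). -/
def matrixOpNorm (A : Matrix (Fin 4) (Fin 4) ℂ) : ℝ :=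
  ‖Matrix.toEuclideanCLM (𝕜 := ℂ) A‖

open scoped Matrix.Norms.L2Operator

lemma alpha0 : diracAlpha 0 = !![0,0,0,1; 0,0,1,0; 0,1,0,0; 1,0,0,0] := by
  show diracGamma 0 * diracGamma 1 = _
  ext i j; fin_cases i <;> fin_cases j <;>
    simp [diracGamma, Matrix.mul_apply, Fin.sum_univ_four, Matrix.vecHead, Matrix.vecTail]

lemma alpha1 : diracAlpha 1 = !![0,0,0,-I; 0,0,I,0; 0,-I,0,0; I,0,0,0] := by
  show diracGamma 0 * diracGamma 2 = _
  ext i j; fin_cases i <;> fin_cases j <;>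
    simp [diracGamma, Matrix.mul_apply, Fin.sum_univ_four, Matrix.vecHead, Matrix.vecTail]

lemma alpha2 : diracAlpha 2 = !![0,0,1,0; 0,0,0,-1; 1,0,0,0; 0,-1,0,0] := by
  show diracGamma 0 * diracGamma 3 = _
  ext i j; fin_cases i <;> fin_cases j <;>
    simp [diracGamma, Matrix.mul_apply, Fin.sum_univ_four, Matrix.vecHead, Matrix.vecTail]

set_option maxHeartbeats 2000000 in
lemma D_eq (M : ℝ) (ξ : EuclideanSpace ℝ (Fin 3)) :
    xiDotAlpha ξ + (M : ℂ) • diracBeta =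
    !![(M:ℂ), 0, (ξ 2 : ℂ), (ξ 0 : ℂ) - I * (ξ 1 : ℂ);
       0, (M:ℂ), (ξ 0 : ℂ) + I * (ξ 1 : ℂ), -(ξ 2 : ℂ);
       (ξ 2 : ℂ), (ξ 0 : ℂ) - I * (ξ 1 : ℂ), -(M:ℂ), 0;
       (ξ 0 : ℂ) + I * (ξ 1 : ℂ), -(ξ 2 : ℂ), 0, -(M:ℂ)] := by
  have hb : diracBeta = !![1,0,0,0; 0,1,0,0; 0,0,-1,0; 0,0,0,-1] := rfl
  rw [xiDotAlpha, Fin.sum_univ_three, alpha0, alpha1, alpha2, hb]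
  ext i j; fin_cases i <;> fin_cases j <;>
    simp [Matrix.vecHead, Matrix.vecTail] <;> ring

lemma norm_sq_eq (ξ : EuclideanSpace ℝ (Fin 3)) :
    ‖ξ‖ ^ 2 = ξ 0 ^ 2 + ξ 1 ^ 2 + ξ 2 ^ 2 := by
  rw [EuclideanSpace.norm_eq, Real.sq_sqrt (by positivity)]
  simp [Fin.sum_univ_three, sq_abs]

set_option maxHeartbeats 2000000 in
lemma Dsq (M : ℝ) (ξ : EuclideanSpace ℝ (Fin 3)) :
    (xiDotAlpha ξ + (M : ℂ) • diracBeta) * (xiDotAlpha ξ + (M : ℂ) • diracBeta)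
      = ((‖ξ‖ ^ 2 + M ^ 2 : ℝ) : ℂ) • 1 := by
  rw [D_eq, norm_sq_eq]
  ext i j
  fin_cases i <;> fin_cases j <;>
    simp [Matrix.mul_apply, Fin.sum_univ_four, Matrix.one_apply] <;>
    push_cast
  all_goals try ring
  all_goals linear_combination (-(ξ 1 : ℂ) ^ 2) * Complex.I_sq



open scoped Matrix.Norms.L2Operator

lemma mop_eq (A : Matrix (Fin 4) (Fin 4) ℂ) : matrixOpNorm A = ‖A‖ :=
  (Matrix.cstar_norm_def A).symm

lemma norm_one_mat : ‖(1 : Matrix (Fin 4) (Fin 4) ℂ)‖ = 1 := by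
  rw [Matrix.cstar_norm_def, _root_.map_one]; exact norm_one

lemma norm_of_unitary {A : Matrix (Fin 4) (Fin 4) ℂ} (h : Aᴴ * A = 1) : ‖A‖ = 1 := by
  have h2 := Matrix.l2_opNorm_conjTranspose_mul_self A
  rw [h, norm_one_mat] at h2
  nlinarith [norm_nonneg A]

set_option maxHeartbeats 1000000 in
lemma norm_beta : ‖diracBeta‖ = 1 := by
  apply norm_of_unitary
  have hb : diracBeta = !![1,0,0,0; 0,1,0,0; 0,0,-1,0; 0,0,0,-1] := rfl
  rw [hb]
  ext i j
  fin_cases i <;> fin_cases j <;>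
    simp [Matrix.mul_apply, Fin.sum_univ_four, Matrix.conjTranspose_apply, Matrix.one_apply,
      Matrix.vecHead, Matrix.vecTail]

set_option maxHeartbeats 2000000 in
lemma norm_alpha0 : ‖diracAlpha 0‖ = 1 := by
  apply norm_of_unitary
  rw [alpha0]
  ext i j
  fin_cases i <;> fin_cases j <;>
    simp [Matrix.mul_apply, Fin.sum_univ_four, Matrix.conjTranspose_apply, Matrix.one_apply,
      Matrix.vecHead, Matrix.vecTail]

set_option maxHeartbeats 2000000 in
lemma norm_alpha1 : ‖diracAlpha 1‖ = 1 := by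
  apply norm_of_unitary
  rw [alpha1]
  ext i j
  fin_cases i <;> fin_cases j <;>
    simp [Matrix.mul_apply, Fin.sum_univ_four, Matrix.conjTranspose_apply, Matrix.one_apply,
      Matrix.vecHead, Matrix.vecTail]

set_option maxHeartbeats 2000000 in
lemma norm_alpha2 : ‖diracAlpha 2‖ = 1 := by
  apply norm_of_unitary
  rw [alpha2]
  ext i j
  fin_cases i <;> fin_cases j <;>
    simp [Matrix.mul_apply, Fin.sum_univ_four, Matrix.conjTranspose_apply, Matrix.one_apply,
      Matrix.vecHead, Matrix.vecTail]

lemma norm_alpha (j : Fin 3) : ‖diracAlpha j‖ = 1 := by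
  fin_cases j
  · exact norm_alpha0
  · exact norm_alpha1
  · exact norm_alpha2

lemma jbracket_pos {M : ℝ} {ξ : EuclideanSpace ℝ (Fin 3)} (hξ : ξ ≠ 0) : 0 < jbracket M ξ := by
  have h : 0 < ‖ξ‖ := norm_pos_iff.mpr hξ
  rw [jbracket]; positivity

lemma jbracket_sq {M : ℝ} (hM : 0 ≤ M) (ξ : EuclideanSpace ℝ (Fin 3)) :
    jbracket M ξ ^ 2 = ‖ξ‖ ^ 2 + M ^ 2 := Real.sq_sqrt (by positivity)

lemma norm_le_jbracket (M : ℝ) (ξ : EuclideanSpace ℝ (Fin 3)) : ‖ξ‖ ≤ jbracket M ξ := by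
  rw [jbracket, show ‖ξ‖ = Real.sqrt (‖ξ‖^2) from (Real.sqrt_sq (norm_nonneg ξ)).symm]
  exact Real.sqrt_le_sqrt (by nlinarith [Real.sq_sqrt (sq_nonneg ‖ξ‖)])

lemma M_le_jbracket {M : ℝ} (hM : 0 ≤ M) (ξ : EuclideanSpace ℝ (Fin 3)) : M ≤ jbracket M ξ := by
  rw [jbracket, show M = Real.sqrt (M^2) from (Real.sqrt_sq hM).symm]
  exact Real.sqrt_le_sqrt (by nlinarith [Real.sq_sqrt (sq_nonneg M), sq_nonneg ‖ξ‖])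

lemma jbracket_le {M : ℝ} (hM : 0 ≤ M) (ξ : EuclideanSpace ℝ (Fin 3)) :
    jbracket M ξ ≤ ‖ξ‖ + M := by
  rw [jbracket]
  rw [show ‖ξ‖ + M = Real.sqrt ((‖ξ‖ + M)^2) from
    (Real.sqrt_sq (by positivity)).symm]
  exact Real.sqrt_le_sqrt (by nlinarith [norm_nonneg ξ])

lemma coord_le_norm (ξ : EuclideanSpace ℝ (Fin 3)) (j : Fin 3) : |ξ j| ≤ ‖ξ‖ := by
  rw [EuclideanSpace.norm_eq, ← Real.sqrt_sq_eq_abs]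
  apply Real.sqrt_le_sqrt
  have := Finset.single_le_sum (f := fun i => ‖ξ i‖ ^ 2)
    (fun i _ => by positivity) (Finset.mem_univ j)
  simpa [sq_abs] using this

lemma xiDotAlpha_add (x y : EuclideanSpace ℝ (Fin 3)) :
    xiDotAlpha (x + y) = xiDotAlpha x + xiDotAlpha y := by
  rw [xiDotAlpha, xiDotAlpha, xiDotAlpha, ← Finset.sum_add_distrib]
  congr 1; ext j
  have : (x + y) j = x j + y j := rfl
  rw [this]; push_cast; rw [add_smul]

lemma xiDotAlpha_smul (r : ℝ) (x : EuclideanSpace ℝ (Fin 3)) :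
    xiDotAlpha (r • x) = (r : ℂ) • xiDotAlpha x := by
  simp only [xiDotAlpha, Finset.smul_sum]
  congr 1; ext j
  have : (r • x) j = r * x j := rfl
  rw [this]; push_cast; rw [smul_smul]

lemma norm_xiDotAlpha (x : EuclideanSpace ℝ (Fin 3)) : ‖xiDotAlpha x‖ ≤ 3 * ‖x‖ := by
  rw [xiDotAlpha]
  refine (norm_sum_le _ _).trans ?_
  have h : ∀ j : Fin 3, ‖(x j : ℂ) • diracAlpha j‖ ≤ ‖x‖ := by
    intro j
    rw [norm_smul, norm_alpha, mul_one]
    simpa [Complex.norm_real] using coord_le_norm x j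
  calc ∑ j : Fin 3, ‖(x j : ℂ) • diracAlpha j‖ ≤ ∑ _j : Fin 3, ‖x‖ :=
        Finset.sum_le_sum fun j _ => h j
    _ = 3 * ‖x‖ := by rw [Fin.sum_univ_three]; ring

lemma mul_proj_generic (a b c : ℂ) (D : Matrix (Fin 4) (Fin 4) ℂ) (h : D * D = c • 1) :
    ((2⁻¹:ℂ) • ((1 : Matrix (Fin 4) (Fin 4) ℂ) + a • D)) * ((2⁻¹:ℂ) • ((1 : Matrix (Fin 4) (Fin 4) ℂ) + b • D)) =
      (4⁻¹ * (1 + a * b * c)) • (1 : Matrix (Fin 4) (Fin 4) ℂ) + (4⁻¹ * (a + b)) • D := by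
  have key : ((1 : Matrix (Fin 4) (Fin 4) ℂ) + a • D) * (1 + b • D)
      = (1 + a * b * c) • (1 : Matrix (Fin 4) (Fin 4) ℂ) + (a + b) • D := by
    rw [mul_add, add_mul, add_mul, smul_mul_smul_comm, h, smul_smul]
    simp only [mul_one, one_mul]
    module
  rw [smul_mul_smul_comm, key]
  module

lemma proj_orth {M s : ℝ} (hM : 0 ≤ M) {ξ : EuclideanSpace ℝ (Fin 3)} (hξ : ξ ≠ 0)
    (hs : s = 1 ∨ s = -1) :
    projSymbol M s ξ * projSymbol M (-s) ξ = 0 := by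
  have hj : (0:ℝ) < jbracket M ξ := jbracket_pos hξ
  have hjc : ((jbracket M ξ : ℝ) : ℂ) ≠ 0 := by exact_mod_cast hj.ne'
  have hs2 : (s:ℂ)^2 = 1 := by rcases hs with h | h <;> simp [h]
  have hD : (xiDotAlpha ξ + (M : ℂ) • diracBeta) * (xiDotAlpha ξ + (M : ℂ) • diracBeta)
      = (((jbracket M ξ)^2 : ℝ) : ℂ) • 1 := by rw [Dsq, jbracket_sq hM]
  rw [projSymbol, projSymbol, mul_proj_generic _ _ _ _ hD]
  have h1 : (4⁻¹ * (1 + ((s * (jbracket M ξ)⁻¹ : ℝ) : ℂ) * ((-s * (jbracket M ξ)⁻¹ : ℝ) : ℂ)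
      * (((jbracket M ξ)^2 : ℝ) : ℂ)) : ℂ) = 0 := by
    rcases hs with h | h <;> subst h <;> push_cast <;> field_simp <;> ring
  have h2 : (4⁻¹ * (((s * (jbracket M ξ)⁻¹ : ℝ) : ℂ) + ((-s * (jbracket M ξ)⁻¹ : ℝ) : ℂ)) : ℂ) = 0 := by
    push_cast; ring
  rw [h1, h2, zero_smul, zero_smul, add_zero]

lemma norm_D_le {M : ℝ} (hM : 0 ≤ M) (ξ : EuclideanSpace ℝ (Fin 3)) :
    ‖xiDotAlpha ξ + (M : ℂ) • diracBeta‖ ≤ 3 * ‖ξ‖ + M := by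
  refine (norm_add_le _ _).trans ?_
  have h2 : ‖(M : ℂ) • diracBeta‖ = M := by
    rw [norm_smul, norm_beta, mul_one, Complex.norm_real, Real.norm_eq_abs, _root_.abs_of_nonneg hM]
  rw [h2]
  exact add_le_add_left (norm_xiDotAlpha ξ) M

lemma norm_proj_le {M s : ℝ} (hM : 0 ≤ M) {ξ : EuclideanSpace ℝ (Fin 3)} (hξ : ξ ≠ 0)
    (hs : s = 1 ∨ s = -1) : ‖projSymbol M s ξ‖ ≤ 3 := by
  have hj : (0:ℝ) < jbracket M ξ := jbracket_pos hξ
  have habs : |s| = 1 := by rcases hs with h | h <;> simp [h]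
  rw [projSymbol, norm_smul]
  have h1 : ‖(2⁻¹ : ℂ)‖ = 2⁻¹ := by norm_num
  rw [h1]
  have h2 : ‖(1 : Matrix (Fin 4) (Fin 4) ℂ) +
      ((s * (jbracket M ξ)⁻¹ : ℝ) : ℂ) • (xiDotAlpha ξ + (M : ℂ) • diracBeta)‖ ≤ 6 := by
    refine (norm_add_le _ _).trans ?_
    rw [norm_one_mat, norm_smul, Complex.norm_real, Real.norm_eq_abs, abs_mul, habs, one_mul,
      _root_.abs_of_nonneg (by positivity : (0:ℝ) ≤ (jbracket M ξ)⁻¹)]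
    have hd := norm_D_le hM ξ
    have hn : 3 * ‖ξ‖ + M ≤ 4 * jbracket M ξ := by
      nlinarith [norm_le_jbracket M ξ, M_le_jbracket hM ξ]
    have : (jbracket M ξ)⁻¹ * ‖xiDotAlpha ξ + (M : ℂ) • diracBeta‖ ≤ 4 := by
      rw [inv_mul_le_iff₀ hj]
      nlinarith [norm_nonneg (xiDotAlpha ξ + (M : ℂ) • diracBeta)]
    linarith
  linarith

lemma diff_eq (M s : ℝ) (ξ η : EuclideanSpace ℝ (Fin 3)) :
    projSymbol M s η - projSymbol M (-s) ξ
      = (2⁻¹:ℂ) • (xiDotAlpha ((s * (jbracket M η)⁻¹) • η + (s * (jbracket M ξ)⁻¹) • ξ)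
          + ((s * ((jbracket M ξ)⁻¹ + (jbracket M η)⁻¹) * M : ℝ) : ℂ) • diracBeta) := by
  rw [projSymbol, projSymbol, xiDotAlpha_add, xiDotAlpha_smul, xiDotAlpha_smul]
  match_scalars <;> push_cast <;> ring

lemma two_sub_two_cos_le (θ : ℝ) : 2 - 2 * Real.cos θ ≤ θ ^ 2 := by
  have h1 := Real.sin_sq_le_sq (x := θ / 2)
  have h2 := Real.sin_sq_eq_half_sub (θ / 2)
  rw [show 2 * (θ / 2) = θ by ring] at h2
  nlinarith

lemma norm_unit_add_unit_le {ξ η : EuclideanSpace ℝ (Fin 3)} (hξ : ξ ≠ 0) (hη : η ≠ 0) :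
    ‖‖ξ‖⁻¹ • ξ + ‖η‖⁻¹ • η‖ ≤ InnerProductGeometry.angle (-ξ) η := by
  have hnξ : (0:ℝ) < ‖ξ‖ := norm_pos_iff.mpr hξ
  have hnη : (0:ℝ) < ‖η‖ := norm_pos_iff.mpr hη
  set θ := InnerProductGeometry.angle (-ξ) η with hθ
  have hθ0 : 0 ≤ θ := InnerProductGeometry.angle_nonneg _ _
  have hcos : Real.cos θ = -(inner ℝ ξ η : ℝ) / (‖ξ‖ * ‖η‖) := by
    rw [hθ, InnerProductGeometry.cos_angle, inner_neg_left, norm_neg]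
  have hsq : ‖‖ξ‖⁻¹ • ξ + ‖η‖⁻¹ • η‖ ^ 2 = 2 - 2 * Real.cos θ := by
    rw [norm_add_sq_real, norm_smul, norm_smul, real_inner_smul_left, real_inner_smul_right]
    rw [Real.norm_eq_abs, Real.norm_eq_abs, _root_.abs_of_nonneg (by positivity : (0:ℝ) ≤ ‖ξ‖⁻¹),
      _root_.abs_of_nonneg (by positivity : (0:ℝ) ≤ ‖η‖⁻¹), hcos]
    field_simp
    ring
  have hb := two_sub_two_cos_le θ
  nlinarith [norm_nonneg (‖ξ‖⁻¹ • ξ + ‖η‖⁻¹ • η)]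

lemma correction_le {M : ℝ} (hM : 0 ≤ M) {ξ : EuclideanSpace ℝ (Fin 3)} (hξ : ξ ≠ 0) :
    ‖((jbracket M ξ)⁻¹ - ‖ξ‖⁻¹) • ξ‖ ≤ M * (jbracket M ξ)⁻¹ := by
  have hnξ : (0:ℝ) < ‖ξ‖ := norm_pos_iff.mpr hξ
  have hj : (0:ℝ) < jbracket M ξ := jbracket_pos hξ
  have hle : ‖ξ‖ ≤ jbracket M ξ := norm_le_jbracket M ξ
  have hle2 : jbracket M ξ ≤ ‖ξ‖ + M := jbracket_le hM ξ
  rw [norm_smul, Real.norm_eq_abs, abs_sub_comm,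
    _root_.abs_of_nonneg (by
      have : (jbracket M ξ)⁻¹ ≤ ‖ξ‖⁻¹ := by
        apply inv_anti₀ hnξ hle
      linarith)]
  rw [sub_mul, inv_mul_cancel₀ hnξ.ne']
  have hinv : (jbracket M ξ)⁻¹ * jbracket M ξ = 1 := inv_mul_cancel₀ hj.ne'
  nlinarith [inv_nonneg.mpr hj.le]

lemma geo {M : ℝ} (hM : 0 ≤ M) {ξ η : EuclideanSpace ℝ (Fin 3)} (hξ : ξ ≠ 0) (hη : η ≠ 0) :
    ‖(jbracket M ξ)⁻¹ • ξ + (jbracket M η)⁻¹ • η‖ ≤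
      InnerProductGeometry.angle (-ξ) η + M * (jbracket M ξ)⁻¹ + M * (jbracket M η)⁻¹ := by
  have hdec : (jbracket M ξ)⁻¹ • ξ + (jbracket M η)⁻¹ • η
      = (‖ξ‖⁻¹ • ξ + ‖η‖⁻¹ • η) + (((jbracket M ξ)⁻¹ - ‖ξ‖⁻¹) • ξ + ((jbracket M η)⁻¹ - ‖η‖⁻¹) • η) := by
    module
  rw [hdec]
  refine (norm_add_le _ _).trans ?_
  have h2 := (norm_add_le (((jbracket M ξ)⁻¹ - ‖ξ‖⁻¹) • ξ) (((jbracket M η)⁻¹ - ‖η‖⁻¹) • η))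
  have h3 := correction_le hM hξ
  have h4 := correction_le hM hη
  have h5 := norm_unit_add_unit_le hξ hη
  linarith


/-- For fixed `M ≥ 0` there is `C > 0` such that for all nonzero `ξ, η ∈ ℝ³` and either sign,
`‖Π^M_±(ξ) Π^M_±(η)‖ ≤ C (∠(−ξ,η) + ⟨ξ⟩_M^{−1} + ⟨η⟩_M^{−1})`. -/
theorem projSymbol_product_same_sign_bound (M : ℝ) (hM : 0 ≤ M) :
    ∃ C > (0 : ℝ), ∀ ξ η : EuclideanSpace ℝ (Fin 3), ξ ≠ 0 → η ≠ 0 →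
      ∀ s : ℝ, s = 1 ∨ s = -1 →
        matrixOpNorm (projSymbol M s ξ * projSymbol M s η) ≤
          C * (InnerProductGeometry.angle (-ξ) η + (jbracket M ξ)⁻¹ + (jbracket M η)⁻¹) := by
  refine ⟨6 * (M + 1), by positivity, ?_⟩
  intro ξ η hξ hη s hs
  have hjξ : (0:ℝ) < jbracket M ξ := jbracket_pos hξ
  have hjη : (0:ℝ) < jbracket M η := jbracket_pos hη
  have hθ0 : 0 ≤ InnerProductGeometry.angle (-ξ) η := InnerProductGeometry.angle_nonneg _ _
  set θ := InnerProductGeometry.angle (-ξ) η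
  have habs : |s| = 1 := by rcases hs with h | h <;> simp [h]
  -- key factorization
  have key : projSymbol M s ξ * projSymbol M s η
      = projSymbol M s ξ * (projSymbol M s η - projSymbol M (-s) ξ) := by
    rw [mul_sub, proj_orth hM hξ hs, sub_zero]
  rw [mop_eq, key]
  refine (norm_mul_le _ _).trans ?_
  -- bound on the difference
  have hw : ((s * (jbracket M η)⁻¹) • η + (s * (jbracket M ξ)⁻¹) • ξ : EuclideanSpace ℝ (Fin 3))
      = s • ((jbracket M ξ)⁻¹ • ξ + (jbracket M η)⁻¹ • η) := by module
  have hwn : ‖((s * (jbracket M η)⁻¹) • η + (s * (jbracket M ξ)⁻¹) • ξ : EuclideanSpace ℝ (Fin 3))‖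
      ≤ θ + M * (jbracket M ξ)⁻¹ + M * (jbracket M η)⁻¹ := by
    rw [hw, norm_smul, Real.norm_eq_abs, habs, one_mul]
    exact geo hM hξ hη
  have hdiff : ‖projSymbol M s η - projSymbol M (-s) ξ‖ ≤
      2⁻¹ * (3 * (θ + M * (jbracket M ξ)⁻¹ + M * (jbracket M η)⁻¹)
        + ((jbracket M ξ)⁻¹ + (jbracket M η)⁻¹) * M) := by
    rw [diff_eq, norm_smul]
    have h1 : ‖(2⁻¹ : ℂ)‖ = 2⁻¹ := by norm_num
    rw [h1]
    have h2 : ‖((s * ((jbracket M ξ)⁻¹ + (jbracket M η)⁻¹) * M : ℝ) : ℂ) • diracBeta‖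
        = ((jbracket M ξ)⁻¹ + (jbracket M η)⁻¹) * M := by
      rw [norm_smul, norm_beta, mul_one, Complex.norm_real, Real.norm_eq_abs, abs_mul, abs_mul,
        habs, one_mul, _root_.abs_of_nonneg (by positivity : (0:ℝ) ≤ (jbracket M ξ)⁻¹ + (jbracket M η)⁻¹),
        _root_.abs_of_nonneg hM]
    gcongr
    refine (norm_add_le _ _).trans ?_
    rw [h2]
    have h3 := (norm_xiDotAlpha ((s * (jbracket M η)⁻¹) • η + (s * (jbracket M ξ)⁻¹) • ξ)).trans
      (by nlinarith : 3 * ‖((s * (jbracket M η)⁻¹) • η + (s * (jbracket M ξ)⁻¹) • ξ : EuclideanSpace ℝ (Fin 3))‖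
        ≤ 3 * (θ + M * (jbracket M ξ)⁻¹ + M * (jbracket M η)⁻¹))
    linarith
  have hP := norm_proj_le hM hξ hs
  have hd0 : (0:ℝ) ≤ ‖projSymbol M s η - projSymbol M (-s) ξ‖ := norm_nonneg _
  have hstep : ‖projSymbol M s ξ‖ * ‖projSymbol M s η - projSymbol M (-s) ξ‖
      ≤ 3 * (2⁻¹ * (3 * (θ + M * (jbracket M ξ)⁻¹ + M * (jbracket M η)⁻¹)
        + ((jbracket M ξ)⁻¹ + (jbracket M η)⁻¹) * M)) := by
    have := mul_le_mul hP hdiff hd0 (by norm_num : (0:ℝ) ≤ 3)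
    linarith
  refine hstep.trans ?_
  have hiξ : (0:ℝ) ≤ (jbracket M ξ)⁻¹ := by positivity
  have hiη : (0:ℝ) ≤ (jbracket M η)⁻¹ := by positivity
  nlinarith [mul_nonneg hM hiξ, mul_nonneg hM hiη, mul_nonneg hM hθ0]
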